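/- Let μ, θ, γ, Δx, ω be real with θ > 0, γ > 0, Δx > 0, and set a = μ/(2Δx) + θ/Δx², b = -2θ/Δx² - γ, c = -μ/(2Δx) + θ/Δx². For s = σ + iω with σ ≥ 0, the complex number (s - b)² - 4ac is never zero; in particular the principal square root √((s-b)² - 4ac) has positive real part. Consequently, the functions r±(s) = (s - b ± √((s-b)² - 4ac))/(2c) (for c ≠ 0) are holomorphic on the closed right half-plane Re(s) ≥ 0. -/

import Mathlib

lemma aux13_slit (μ θ γ Δx : ℝ) (hθ : 0 < θ) (hγ : 0 < γ) (hΔx : 0 < Δx)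
    (a b c : ℝ)
    (ha : a = μ / (2 * Δx) + θ / Δx ^ 2)
    (hb : b = -(2 * θ) / Δx ^ 2 - γ)
    (hc : c = -(μ / (2 * Δx)) + θ / Δx ^ 2)
    (z : ℂ) (hz : 0 ≤ z.re) :
    ((z - (b : ℂ)) ^ 2 - 4 * (a : ℂ) * (c : ℂ)) ∈ Complex.slitPlane := by
  set x : ℝ := z.re - b with hx
  set y : ℝ := z.im with hy
  have hbrw : b = -(2 * θ / Δx ^ 2) - γ := by rw [hb, neg_div]
  have hbneg : b < 0 := by
    rw [hbrw]
    have h1 : 0 < (2 * θ) / Δx ^ 2 := by positivity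
    nlinarith
  have hxpos : 0 < x := by simp [hx]; linarith
  have hxb : -b ≤ x := by simp [hx]; linarith
  have hkey : 4 * a * c < x ^ 2 := by
    have h1 : 4 * a * c ≤ (2 * θ / Δx ^ 2) ^ 2 := by
      rw [ha, hc]
      have : 0 ≤ (μ / (2 * Δx)) ^ 2 := sq_nonneg _
      ring_nf
      nlinarith [sq_nonneg (μ / (2*Δx)), sq_nonneg (θ / Δx^2)]
    have h2 : (2 * θ / Δx ^ 2) ^ 2 < b ^ 2 := by
      rw [hbrw]
      have h3 : 0 < 2 * θ / Δx ^ 2 := by positivity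
      nlinarith
    have h4 : b ^ 2 ≤ x ^ 2 := by nlinarith
    linarith
  have hre : ((z - (b : ℂ)) ^ 2 - 4 * (a : ℂ) * (c : ℂ)).re = x ^ 2 - y ^ 2 - 4 * a * c := by
    simp only [Complex.sub_re, Complex.mul_re, pow_two, Complex.sub_im, Complex.ofReal_re,
      Complex.ofReal_im, Complex.mul_im, Complex.re_ofNat, Complex.im_ofNat, hx, hy]
    ring
  have him : ((z - (b : ℂ)) ^ 2 - 4 * (a : ℂ) * (c : ℂ)).im = 2 * x * y := by
    simp only [Complex.sub_re, Complex.mul_re, pow_two, Complex.sub_im, Complex.ofReal_re,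
      Complex.ofReal_im, Complex.mul_im, Complex.re_ofNat, Complex.im_ofNat, hx, hy]
    ring
  rw [Complex.mem_slitPlane_iff]
  by_cases hy0 : y = 0
  · left
    rw [hre, hy0]
    nlinarith
  · right
    rw [him]
    positivity

/-- On the closed right half-plane, `(s-b)² - 4ac` never vanishes, its
principal square root has positive real part, and the characteristic roots
`r±(s)` are holomorphic there. -/
theorem stmt_13 (μ θ γ Δx : ℝ) (hθ : 0 < θ) (hγ : 0 < γ) (hΔx : 0 < Δx)
    (a b c : ℝ)
    (ha : a = μ / (2 * Δx) + θ / Δx ^ 2)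
    (hb : b = -(2 * θ) / Δx ^ 2 - γ)
    (hc : c = -(μ / (2 * Δx)) + θ / Δx ^ 2)
    (s : ℂ) (hs : 0 ≤ s.re) :
    ((s - (b : ℂ)) ^ 2 - 4 * (a : ℂ) * (c : ℂ) ≠ 0) ∧
    0 < (((s - (b : ℂ)) ^ 2 - 4 * (a : ℂ) * (c : ℂ)) ^ ((1 : ℂ) / 2)).re ∧
    (c ≠ 0 →
      DifferentiableAt ℂ
        (fun z : ℂ =>
          (z - (b : ℂ) +
              ((z - (b : ℂ)) ^ 2 - 4 * (a : ℂ) * (c : ℂ)) ^ ((1 : ℂ) / 2)) /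
            (2 * (c : ℂ))) s ∧
      DifferentiableAt ℂ
        (fun z : ℂ =>
          (z - (b : ℂ) -
              ((z - (b : ℂ)) ^ 2 - 4 * (a : ℂ) * (c : ℂ)) ^ ((1 : ℂ) / 2)) /
            (2 * (c : ℂ))) s) := by
  have hslit := aux13_slit μ θ γ Δx hθ hγ hΔx a b c ha hb hc s hs
  set D : ℂ := (s - (b : ℂ)) ^ 2 - 4 * (a : ℂ) * (c : ℂ) with hD
  have hne : D ≠ 0 := Complex.slitPlane_ne_zero hslit
  refine ⟨hne, ?_, ?_⟩
  · rw [show (1 : ℂ) / 2 = (2⁻¹ : ℂ) by norm_num, Complex.cpow_inv_two_re]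
    apply Real.sqrt_pos.2
    rw [Complex.mem_slitPlane_iff] at hslit
    rcases hslit with h | h
    · have := norm_nonneg D
      linarith
    · have : |D.re| < ‖D‖ := Complex.abs_re_lt_norm.2 h
      have := neg_abs_le D.re
      linarith
  · intro hc0
    have hdsqrt : DifferentiableAt ℂ
        (fun z : ℂ => ((z - (b : ℂ)) ^ 2 - 4 * (a : ℂ) * (c : ℂ)) ^ ((1 : ℂ) / 2)) s := by
      apply DifferentiableAt.cpow
      · apply DifferentiableAt.sub
        · exact (differentiableAt_id.sub (differentiableAt_const _)).pow 2
        · exact differentiableAt_const _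
      · exact differentiableAt_const _
      · exact hslit
    have h2c : (2 * (c : ℂ)) ≠ 0 := by
      simp [Complex.ofReal_ne_zero, hc0]
    constructor
    · exact (((differentiableAt_id.sub (differentiableAt_const _)).add hdsqrt).div
        (differentiableAt_const _) h2c)
    · exact (((differentiableAt_id.sub (differentiableAt_const _)).sub hdsqrt).div
        (differentiableAt_const _) h2c)
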